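/- For every infinite Hausdorff topological space X and every bornology 𝓑 on X, the space ⟨USC*(X), τ_𝓑⟩ does not satisfy the selection principle S₁(𝒫(USC*(X)), 𝒟(USC*(X))). -/

import Mathlib

open Set Filter Topology

/-- A bornology in the sense of the paper: a proper ideal of subsets of `X`
(nonempty, downward closed, closed under binary unions, `X ∉ 𝓑`) whose union is `X`. -/
def IsPBornology {X : Type*} (𝓑 : Set (Set X)) : Prop :=
  𝓑.Nonempty ∧ (∀ A B : Set X, A ⊆ B → B ∈ 𝓑 → A ∈ 𝓑) ∧
    (∀ A B : Set X, A ∈ 𝓑 → B ∈ 𝓑 → A ∪ B ∈ 𝓑) ∧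
    (Set.univ : Set X) ∉ 𝓑 ∧ ⋃₀ 𝓑 = Set.univ

/-- `USC*(X)`: bounded upper semicontinuous real functions on `X`. -/
def USCb (X : Type*) [TopologicalSpace X] : Set (X → ℝ) :=
  {f | (∀ a : ℝ, IsOpen {x | f x < a}) ∧ ∃ M : ℝ, ∀ x, |f x| ≤ M}

/-- `C*(X)`: bounded continuous real functions on `X`. -/
def Cb (X : Type*) [TopologicalSpace X] : Set (X → ℝ) :=
  {f | Continuous f ∧ ∃ M : ℝ, ∀ x, |f x| ≤ M}

/-- `C(X)`: continuous real functions on `X`. -/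
def ContFns (X : Type*) [TopologicalSpace X] : Set (X → ℝ) := {f | Continuous f}

/-- Basic `τ_𝓑`-neighborhood `N_{B,ε}(h)`. -/
def Nbhd {X : Type*} (B : Set X) (ε : ℝ) (h : X → ℝ) : Set (X → ℝ) :=
  {f | ∀ x ∈ B, |h x - f x| < ε}

/-- The topology `τ_𝓑` on `ℝ^X` of uniform convergence on members of `𝓑`. -/
def tauB {X : Type*} (𝓑 : Set (Set X)) : TopologicalSpace (X → ℝ) :=
  TopologicalSpace.generateFrom
    {S | ∃ (h : X → ℝ) (B : Set X) (ε : ℝ), B ∈ 𝓑 ∧ 0 < ε ∧ S = Nbhd B ε h}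

/-- The ball `𝔹(B,V)` about `B` of radius an entourage `V`. -/
def UBall {X : Type*} (B : Set X) (V : Set (X × X)) : Set X :=
  {x | ∃ y ∈ B, (x, y) ∈ V}

/-- Basic `τ_𝓑ˢ`-neighborhood `Nˢ_{B,ε}(h)`. -/
def NbhdS {X : Type*} [UniformSpace X] (B : Set X) (ε : ℝ) (h : X → ℝ) : Set (X → ℝ) :=
  {f | ∃ V ∈ uniformity X, ∀ x ∈ UBall B V, |h x - f x| < ε}

/-- The topology `τ_𝓑ˢ` on `ℝ^X`. -/
def tauBs {X : Type*} [UniformSpace X] (𝓑 : Set (Set X)) : TopologicalSpace (X → ℝ) :=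
  TopologicalSpace.generateFrom
    {S | ∃ (h : X → ℝ) (B : Set X) (ε : ℝ), B ∈ 𝓑 ∧ 0 < ε ∧ S = NbhdS B ε h}

/-- The selection principle `S₁(𝒜, ℬ)`. -/
def S1 {α : Type*} (𝒜 ℬ : Set (Set α)) : Prop :=
  ∀ u : ℕ → Set α, (∀ n, u n ∈ 𝒜) → ∃ s : ℕ → α, (∀ n, s n ∈ u n) ∧ Set.range s ∈ ℬ

/-- `𝒰` is an open cover of `X`. -/
def IsOCover {X : Type*} [TopologicalSpace X] (𝒰 : Set (Set X)) : Prop :=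
  (∀ U ∈ 𝒰, IsOpen U) ∧ ⋃₀ 𝒰 = Set.univ

/-- `𝒪(X)`: all open covers of `X`. -/
def OCovers (X : Type*) [TopologicalSpace X] : Set (Set (Set X)) := {𝒰 | IsOCover 𝒰}

/-- `Ω_𝓑(X)`: all open `𝓑`-ω-covers of `X`. -/
def BOmegaCovers {X : Type*} [TopologicalSpace X] (𝓑 : Set (Set X)) : Set (Set (Set X)) :=
  {𝒰 | IsOCover 𝒰 ∧ Set.univ ∉ 𝒰 ∧ ∀ B ∈ 𝓑, ∃ U ∈ 𝒰, B ⊆ U}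

/-- `Γ_𝓑(X)`: all open `𝓑`-γ-covers of `X`. -/
def BGammaCovers {X : Type*} [TopologicalSpace X] (𝓑 : Set (Set X)) : Set (Set (Set X)) :=
  {𝒰 | IsOCover 𝒰 ∧ 𝒰.Infinite ∧ ∀ B ∈ 𝓑, {U ∈ 𝒰 | ¬ B ⊆ U}.Finite}

/-- `Ω^s_𝓑(X)`: all open strong `𝓑`-ω-covers of `X`. -/
def BOmegaSCovers {X : Type*} [UniformSpace X] (𝓑 : Set (Set X)) : Set (Set (Set X)) :=
  {𝒰 | IsOCover 𝒰 ∧ Set.univ ∉ 𝒰 ∧ ∀ B ∈ 𝓑, ∃ U ∈ 𝒰, ∃ V ∈ uniformity X, UBall B V ⊆ U}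

/-- `Γ^s_𝓑(X)`: all open strong `𝓑`-γ-covers of `X`. -/
def BGammaSCovers {X : Type*} [UniformSpace X] (𝓑 : Set (Set X)) : Set (Set (Set X)) :=
  {𝒰 | IsOCover 𝒰 ∧ 𝒰.Infinite ∧
    ∀ B ∈ 𝓑, {U ∈ 𝒰 | ¬ ∃ V ∈ uniformity X, UBall B V ⊆ U}.Finite}

/-- `B` and the complement of `U` are functionally separated. -/
def FunSep {X : Type*} [TopologicalSpace X] (B U : Set X) : Prop :=
  ∃ f : X → ℝ, Continuous f ∧ (∀ x ∈ B, f x = 0) ∧ ∀ x ∈ Uᶜ, f x = 1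

/-- `Ω_{𝓑^f}(X)`: all open functionally separated `𝓑`-ω-covers of `X`. -/
def BfOmegaCovers {X : Type*} [TopologicalSpace X] (𝓑 : Set (Set X)) : Set (Set (Set X)) :=
  {𝒰 | IsOCover 𝒰 ∧ ∀ B ∈ 𝓑, ∃ U ∈ 𝒰, FunSep B U}

/-- `Γ_{𝓑^f}(X)`: all open functionally separated `𝓑`-γ-covers of `X`. -/
def BfGammaCovers {X : Type*} [TopologicalSpace X] (𝓑 : Set (Set X)) : Set (Set (Set X)) :=
  {𝒰 | IsOCover 𝒰 ∧ 𝒰.Infinite ∧ ∀ B ∈ 𝓑, {U ∈ 𝒰 | ¬ FunSep B U}.Finite}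

/-- The bornology `Fin` of finite subsets. -/
def FinB (X : Type*) : Set (Set X) := {B | B.Finite}

/-- `𝒟(H)`: subsets of `H` dense in `H` w.r.t. the topology `t`. -/
def DFam {X : Type*} (t : TopologicalSpace (X → ℝ)) (H : Set (X → ℝ)) : Set (Set (X → ℝ)) :=
  {F | F ⊆ H ∧ H ⊆ @closure _ t F}

/-- `𝒮(H)`: subsets of `H` sequentially dense in `H` w.r.t. the topology `t`. -/
def SFam {X : Type*} (t : TopologicalSpace (X → ℝ)) (H : Set (X → ℝ)) : Set (Set (X → ℝ)) :=
  {F | F ⊆ H ∧ ∀ h ∈ H, ∃ s : ℕ → X → ℝ, (∀ n, s n ∈ F) ∧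
    Filter.Tendsto s Filter.atTop (@nhds _ t h)}

/-- `𝒫(H)`: pointwise dense subsets of `H`. -/
def PFam {X : Type*} (H : Set (X → ℝ)) : Set (Set (X → ℝ)) :=
  {F | F ⊆ H ∧ ∀ h ∈ H, ∀ x : X, h x ∈ closure {y : ℝ | ∃ f ∈ F, f x = y}}

/-- `𝒟↑(H)`: upper dense subsets of `H` w.r.t. the topology `t`. -/
def UpperDenseFam {X : Type*} (t : TopologicalSpace (X → ℝ)) (H : Set (X → ℝ)) :
    Set (Set (X → ℝ)) :=
  {F | F ⊆ H ∧ ∀ f ∈ H, {h | h ∈ H ∧ f ≤ h} ⊆ @closure _ t {h | h ∈ F ∧ f ≤ h ∧ h - f ∈ H}}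

/-- `𝒮↑(H)`: upper sequentially dense subsets of `H` w.r.t. the topology `t`. -/
def UpperSeqDenseFam {X : Type*} (t : TopologicalSpace (X → ℝ)) (H : Set (X → ℝ)) :
    Set (Set (X → ℝ)) :=
  {F | F ⊆ H ∧ ∀ f ∈ H, ∃ s : ℕ → X → ℝ,
    (∀ n, s n ∈ F ∧ f ≤ s n ∧ s n - f ∈ H) ∧
    Filter.Tendsto s Filter.atTop (@nhds _ t f)}

/-- `H` is separable w.r.t. the topology `t`. -/
def SeparableIn {X : Type*} (t : TopologicalSpace (X → ℝ)) (H : Set (X → ℝ)) : Prop :=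
  ∃ D : Set (X → ℝ), D.Countable ∧ D ∈ DFam t H

/-- `H` is sequentially separable w.r.t. the topology `t`. -/
def SeqSeparableIn {X : Type*} (t : TopologicalSpace (X → ℝ)) (H : Set (X → ℝ)) : Prop :=
  ∃ D : Set (X → ℝ), D.Countable ∧ D ∈ SFam t H

/-- Property `(𝒪_h)`. -/
def PropO {X : Type*} (F : Set (X → ℝ)) (h : X → ℝ) : Prop :=
  ∀ x : X, h x ∈ closure {y : ℝ | ∃ f ∈ F, f x = y}

/-- Property `(Ω_h)_𝓑`. -/
def PropOmega {X : Type*} (𝓑 : Set (Set X)) (F : Set (X → ℝ)) (h : X → ℝ) : Prop :=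
  h ∉ F ∧ h ∈ @closure _ (tauB 𝓑) F

/-- Property `(Γ_h)_𝓑`. -/
def PropGamma {X : Type*} (𝓑 : Set (Set X)) (F : Set (X → ℝ)) (h : X → ℝ) : Prop :=
  F.Infinite ∧ ∀ ε : ℝ, 0 < ε → ∀ B ∈ 𝓑, {f ∈ F | ∃ x ∈ B, ε ≤ |f x - h x|}.Finite

/-- `𝒪_{h,𝓑}(H)`. -/
def OFam {X : Type*} (h : X → ℝ) (H : Set (X → ℝ)) : Set (Set (X → ℝ)) :=
  {F | F ⊆ H ∧ PropO F h ∧ ∀ f ∈ F, h ≤ f ∧ f - h ∈ H}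

/-- `Ω_{h,𝓑}(H)`. -/
def OmegaFam {X : Type*} (𝓑 : Set (Set X)) (h : X → ℝ) (H : Set (X → ℝ)) :
    Set (Set (X → ℝ)) :=
  {F | F ⊆ H ∧ PropOmega 𝓑 F h ∧ ∀ f ∈ F, h ≤ f ∧ f - h ∈ H}

/-- `Γ_{h,𝓑}(H)`. -/
def GammaFam {X : Type*} (𝓑 : Set (Set X)) (h : X → ℝ) (H : Set (X → ℝ)) :
    Set (Set (X → ℝ)) :=
  {F | F ⊆ H ∧ PropGamma 𝓑 F h ∧ ∀ f ∈ F, h ≤ f ∧ f - h ∈ H}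

open Classical in
/-- The function `f_{U,g}`. -/
noncomputable def fUg {X : Type*} (U : Set X) (g : X → ℝ) : X → ℝ :=
  fun x => if x ∈ U then g x else g x + 1 + ⨆ y, |g y|

/-- The family `S(𝒰)`. -/
def SU {X : Type*} [TopologicalSpace X] (𝒰 : Set (Set X)) : Set (X → ℝ) :=
  {f | ∃ U ∈ 𝒰, ∃ g ∈ USCb X, f = fUg U g}

/-- `Ψ_𝓑(X)` for `Ψ = 𝒪, Ω, Γ` coded by `0, 1, 2 : Fin 3`. -/
def covFam (X : Type*) [TopologicalSpace X] (𝓑 : Set (Set X)) (i : Fin 3) :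
    Set (Set (Set X)) :=
  if i = 0 then OCovers X else if i = 1 then BOmegaCovers 𝓑 else BGammaCovers 𝓑

/-- `Ψ_{h,𝓑}(H)` for `Ψ = 𝒪, Ω, Γ` coded by `0, 1, 2 : Fin 3`. -/
def funFam {X : Type*} (𝓑 : Set (Set X)) (h : X → ℝ) (H : Set (X → ℝ)) (i : Fin 3) :
    Set (Set (X → ℝ)) :=
  if i = 0 then OFam h H else if i = 1 then OmegaFam 𝓑 h H else GammaFam 𝓑 h H

/-- `H` (as a subspace w.r.t. the topology `t`) is Fréchet–Urysohn. -/
def FUOn {X : Type*} (t : TopologicalSpace (X → ℝ)) (H : Set (X → ℝ)) : Prop :=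
  ∀ A : Set (X → ℝ), A ⊆ H → ∀ y ∈ H, y ∈ @closure _ t A →
    ∃ s : ℕ → X → ℝ, (∀ n, s n ∈ A) ∧ Filter.Tendsto s Filter.atTop (@nhds _ t y)

/-- `H` (as a subspace w.r.t. the topology `t`) is strictly Fréchet–Urysohn. -/
def SFUOn {X : Type*} (t : TopologicalSpace (X → ℝ)) (H : Set (X → ℝ)) : Prop :=
  ∀ y ∈ H, ∀ A : ℕ → Set (X → ℝ), (∀ n, A n ⊆ H) → (∀ n, y ∈ @closure _ t (A n)) →
    ∃ s : ℕ → X → ℝ, (∀ n, s n ∈ A n) ∧ Filter.Tendsto s Filter.atTop (@nhds _ t y)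

/-- For every infinite Hausdorff space `X` and bornology `𝓑` on `X`,
`⟨USC*(X), τ_𝓑⟩` does not satisfy `S₁(𝒫(USC*(X)), 𝒟(USC*(X)))`. -/
theorem statement6 {X : Type*} [TopologicalSpace X] [T2Space X] [Infinite X]
    (𝓑 : Set (Set X)) (h𝓑 : IsPBornology 𝓑) :
    ¬ S1 (PFam (USCb X)) (DFam (tauB 𝓑) (USCb X)) := by
  intro hS1
  obtain ⟨a, b, hab⟩ := exists_pair_ne X
  obtain ⟨hne, hdown, hunion, hproper, hcover⟩ := h𝓑
  have hmemB : ∀ x : X, ({x} : Set X) ∈ 𝓑 := by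
    intro x
    have hx : x ∈ ⋃₀ 𝓑 := by rw [hcover]; trivial
    obtain ⟨B, hB, hxB⟩ := hx
    exact hdown {x} B (by simpa using hxB) hB
  have hab𝓑 : ({a, b} : Set X) ∈ 𝓑 := by
    have heq : ({a, b} : Set X) = {a} ∪ {b} := (Set.singleton_union).symm
    rw [heq]
    exact hunion {a} {b} (hmemB a) (hmemB b)
  classical
  set h : X → ℝ := fun x => if x = b then 1 else 0 with hh
  have hha : h a = 0 := by simp [hh, hab]
  have hhb : h b = 1 := by simp [hh]
  have hhval : ∀ x : X, h x = 0 ∨ h x = 1 := by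
    intro x
    rw [hh]
    by_cases hx : x = b
    · right; simp [hx]
    · left; simp [hx]
  have hhUSC : h ∈ USCb X := by
    constructor
    · intro α
      rcases le_or_gt α 0 with h0 | h0
      · have heq : {x | h x < α} = (∅ : Set X) := by
          ext x
          simp only [Set.mem_setOf_eq, Set.mem_empty_iff_false, iff_false, not_lt]
          rcases hhval x with hv | hv <;> rw [hv] <;> linarith
        rw [heq]; exact isOpen_empty
      · rcases le_or_gt α 1 with h1 | h1
        · have heq : {x | h x < α} = ({b} : Set X)ᶜ := by
            ext x
            simp only [Set.mem_setOf_eq, Set.mem_compl_iff, Set.mem_singleton_iff]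
            constructor
            · intro hlt hx'
              rw [hx', hhb] at hlt
              linarith
            · intro hx'
              rw [hh]
              simp only [if_neg hx']
              linarith
          rw [heq]
          exact isClosed_singleton.isOpen_compl
        · have heq : {x | h x < α} = (Set.univ : Set X) := by
            ext x
            simp only [Set.mem_setOf_eq, Set.mem_univ, iff_true]
            rcases hhval x with hv | hv <;> rw [hv] <;> linarith
          rw [heq]; exact isOpen_univ
    · refine ⟨1, fun x => ?_⟩
      rcases hhval x with hv | hv <;> rw [hv] <;> norm_num
  have hconstUSC : ∀ c : ℝ, (fun _ : X => c) ∈ USCb X := by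
    intro c
    constructor
    · intro α
      rcases lt_or_ge c α with hcα | hcα
      · have heq : {x : X | c < α} = Set.univ := by ext x; simpa using hcα
        rw [heq]; exact isOpen_univ
      · have heq : {x : X | c < α} = ∅ := by
          ext x; simpa using not_lt.mpr hcα
        rw [heq]; exact isOpen_empty
    · exact ⟨|c|, fun x => le_rfl⟩
  set N : Set (X → ℝ) := Nbhd {a, b} (1/2) h with hN
  have hconstNotN : ∀ c : ℝ, (fun _ : X => c) ∉ N := by
    intro c hc
    have h1 := hc a (by simp)
    have h2 := hc b (by simp)
    rw [hha] at h1
    rw [hhb] at h2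
    rw [abs_lt] at h1 h2
    obtain ⟨h1l, h1r⟩ := h1
    obtain ⟨h2l, h2r⟩ := h2
    linarith
  set 𝒰 : Set (X → ℝ) := USCb X \ N with h𝒰
  have h𝒰P : 𝒰 ∈ PFam (USCb X) := by
    constructor
    · exact Set.diff_subset
    · intro g hg x
      apply subset_closure
      exact ⟨fun _ => g x, ⟨hconstUSC (g x), hconstNotN (g x)⟩, rfl⟩
  obtain ⟨s, hs𝒰, hsD⟩ := hS1 (fun _ => 𝒰) (fun _ => h𝒰P)
  have hNopen : IsOpen[tauB 𝓑] N :=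
    TopologicalSpace.GenerateOpen.basic N ⟨h, {a, b}, 1/2, hab𝓑, by norm_num, rfl⟩
  have hhN : h ∈ N := by
    intro x _
    simpa using (by norm_num : (0:ℝ) < 1/2)
  have hhcl : h ∈ @closure _ (tauB 𝓑) (Set.range s) := hsD.2 hhUSC
  have hhcl2 := (@mem_closure_iff (X → ℝ) (tauB 𝓑) h (Set.range s)).mp hhcl
  obtain ⟨f, hfN, hfrange⟩ := hhcl2 N hNopen hhN
  obtain ⟨n, rfl⟩ := hfrange
  exact (hs𝒰 n).2 hfN
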